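/- Kummer's integral representation of the confluent hypergeometric function: for all real numbers a, b with b > a > 0 and every real z, one has ∫₀¹ e^{z u} u^{a-1} (1-u)^{b-a-1} du = (Γ(a)Γ(b-a)/Γ(b)) · Σ_{k=0}^∞ ((a)_k / (b)_k) · z^k / k!, where (a)_k := Γ(a+k)/Γ(a) denotes the rising factorial and Γ is the real Gamma function. -/

import Mathlib

open Real Filter Topology MeasureTheory Set

lemma beta_eqOn (u v : ℝ) :
    Set.EqOn (fun x : ℝ => (x:ℂ) ^ ((u:ℂ)-1) * ((1:ℂ)-(x:ℂ)) ^ ((v:ℂ)-1))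
      (fun x : ℝ => ((x ^ (u-1) * (1-x) ^ (v-1) : ℝ) : ℂ)) (Set.Icc 0 1) := by
  intro x hx
  have hx0 : (0:ℝ) ≤ x := hx.1
  have hx1 : (0:ℝ) ≤ 1 - x := by linarith [hx.2]
  simp only
  rw [show ((u:ℂ)-1) = ((u-1 : ℝ) : ℂ) by push_cast; ring,
      show ((v:ℂ)-1) = ((v-1 : ℝ) : ℂ) by push_cast; ring,
      show ((1:ℂ) - (x:ℂ)) = ((1 - x : ℝ) : ℂ) by push_cast; ring,
      Complex.ofReal_mul, Complex.ofReal_cpow hx0, Complex.ofReal_cpow hx1]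

lemma beta_integrableOn {u v : ℝ} (hu : 0 < u) (hv : 0 < v) :
    IntegrableOn (fun x : ℝ => x ^ (u-1) * (1-x) ^ (v-1)) (Set.Ioc 0 1) := by
  have h := Complex.betaIntegral_convergent (u := (u:ℂ)) (v := (v:ℂ)) (by simpa) (by simpa)
  rw [intervalIntegrable_iff_integrableOn_Ioc_of_le zero_le_one] at h
  have h2 := h.congr_fun (fun x hx => beta_eqOn u v (Set.Ioc_subset_Icc_self hx)) measurableSet_Ioc
  exact h2.re

lemma beta_value {u v : ℝ} (hu : 0 < u) (hv : 0 < v) :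
    ∫ x in Set.Ioc (0:ℝ) 1, x ^ (u-1) * (1-x) ^ (v-1)
      = Real.Gamma u * Real.Gamma v / Real.Gamma (u+v) := by
  have key : Complex.Gamma u * Complex.Gamma v
      = Complex.Gamma ((u:ℂ)+v) * Complex.betaIntegral u v :=
    Complex.Gamma_mul_Gamma_eq_betaIntegral (by simpa) (by simpa)
  have hbeta : Complex.betaIntegral u v
      = ((∫ x in (0:ℝ)..1, x ^ (u-1) * (1-x) ^ (v-1) : ℝ) : ℂ) := by
    rw [Complex.betaIntegral, ← intervalIntegral.integral_ofReal]
    exact intervalIntegral.integral_congr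
      (fun x hx => beta_eqOn u v (by simpa [Set.uIcc_of_le (zero_le_one (α := ℝ))] using hx))
  rw [hbeta, show ((u:ℂ)+v) = ((u+v : ℝ) : ℂ) by push_cast; ring,
      Complex.Gamma_ofReal, Complex.Gamma_ofReal, Complex.Gamma_ofReal,
      ← Complex.ofReal_mul, ← Complex.ofReal_mul] at key
  have key' := Complex.ofReal_injective key
  have hG : Real.Gamma (u+v) ≠ 0 := (Real.Gamma_pos_of_pos (by linarith)).ne'
  rw [← intervalIntegral.integral_of_le zero_le_one]
  field_simp
  linarith [key']

theorem kummer_integral_representation (a b z : ℝ) (ha : 0 < a) (hab : a < b) :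
    (∫ u in (0:ℝ)..1, Real.exp (z * u) * u ^ (a - 1) * (1 - u) ^ (b - a - 1)) =
      (Real.Gamma a * Real.Gamma (b - a) / Real.Gamma b) *
        ∑' k : ℕ, ((Real.Gamma (a + k) / Real.Gamma a) /
          (Real.Gamma (b + k) / Real.Gamma b)) * z ^ k / (Nat.factorial k) := by
  have hba : 0 < b - a := by linarith
  set F : ℕ → ℝ → ℝ := fun k x => z ^ k / (Nat.factorial k) *
    (x ^ (a + (k:ℝ) - 1) * (1 - x) ^ (b - a - 1)) with hF
  have hFint : ∀ k, IntegrableOn (F k) (Set.Ioo 0 1) := by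
    intro k
    exact (((beta_integrableOn (u := a + k) (by positivity) hba).mono_set
      Set.Ioo_subset_Ioc_self)).const_mul _
  have hDint : ∀ k : ℕ, IntegrableOn
      (fun x : ℝ => |z| ^ k / (Nat.factorial k) * (x ^ (a-1) * (1-x) ^ (b-a-1)))
      (Set.Ioo 0 1) := fun k =>
    ((beta_integrableOn ha hba).mono_set Set.Ioo_subset_Ioc_self).const_mul _
  have hsum : Set.EqOn (fun u : ℝ => Real.exp (z * u) * u ^ (a - 1) * (1 - u) ^ (b - a - 1))
      (fun x => ∑' k, F k x) (Set.Ioo 0 1) := by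
    intro x hx
    have hx0 : (0:ℝ) < x := hx.1
    have hexp : Real.exp (z*x) = ∑' k : ℕ, (z*x) ^ k / (Nat.factorial k) := by
      rw [Real.exp_eq_exp_ℝ, NormedSpace.exp_eq_tsum_div]
    show Real.exp (z*x) * x ^ (a-1) * (1-x) ^ (b-a-1) = ∑' k, F k x
    rw [hexp, mul_assoc, ← tsum_mul_right]
    refine tsum_congr fun k => ?_
    have hx' : x ^ (a + (k:ℝ) - 1) = x ^ (a-1) * x ^ k := by
      rw [show a + (k:ℝ) - 1 = (a-1) + (k:ℝ) by ring, Real.rpow_add hx0, Real.rpow_natCast]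
    show (z*x) ^ k / (Nat.factorial k) * (x ^ (a-1) * (1-x) ^ (b-a-1))
      = z ^ k / (Nat.factorial k) * (x ^ (a + (k:ℝ) - 1) * (1-x) ^ (b-a-1))
    rw [hx', mul_pow]
    ring
  rw [intervalIntegral.integral_of_le zero_le_one, MeasureTheory.integral_Ioc_eq_integral_Ioo,
    MeasureTheory.setIntegral_congr_fun measurableSet_Ioo hsum]
  set B := ∫ x in Set.Ioo (0:ℝ) 1, x ^ (a-1) * (1-x) ^ (b-a-1) with hBdef
  have hB0 : 0 ≤ B := MeasureTheory.setIntegral_nonneg measurableSet_Ioo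
    (fun x hx => mul_nonneg (Real.rpow_nonneg hx.1.le _)
      (Real.rpow_nonneg (by linarith [hx.2]) _))
  have hle : ∀ k, (∫⁻ x, ‖F k x‖₊ ∂((MeasureTheory.volume).restrict (Set.Ioo 0 1)))
      ≤ ENNReal.ofReal (|z| ^ k / (Nat.factorial k) * B) := by
    intro k
    show (∫⁻ x, ‖F k x‖ₑ ∂((MeasureTheory.volume).restrict (Set.Ioo 0 1))) ≤ _
    rw [← MeasureTheory.ofReal_integral_norm_eq_lintegral_enorm (hFint k)]
    apply ENNReal.ofReal_le_ofReal
    have hmono : ∫ x in Set.Ioo (0:ℝ) 1, ‖F k x‖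
        ≤ ∫ x in Set.Ioo (0:ℝ) 1, |z| ^ k / (Nat.factorial k) * (x ^ (a-1) * (1-x) ^ (b-a-1)) := by
      refine MeasureTheory.setIntegral_mono_on (hFint k).norm (hDint k) measurableSet_Ioo ?_
      intro x hx
      have hx0 : (0:ℝ) < x := hx.1
      have hx1 : (0:ℝ) ≤ 1 - x := by linarith [hx.2.le]
      have h1 : x ^ (a + (k:ℝ) - 1) ≤ x ^ (a-1) := by
        rw [show a + (k:ℝ) - 1 = (a-1) + (k:ℝ) by ring, Real.rpow_add hx0, Real.rpow_natCast]
        have h2 : x ^ k ≤ 1 := pow_le_one₀ hx0.le hx.2.le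
        nlinarith [Real.rpow_nonneg hx0.le (a-1)]
      have hnorm : ‖F k x‖ = |z| ^ k / (Nat.factorial k) *
          (x ^ (a + (k:ℝ) - 1) * (1 - x) ^ (b - a - 1)) := by
        rw [hF]
        simp only [Real.norm_eq_abs, abs_mul, abs_div, abs_pow, abs_abs]
        rw [Nat.abs_cast, abs_of_nonneg (Real.rpow_nonneg hx0.le _),
          abs_of_nonneg (Real.rpow_nonneg hx1 _)]
      rw [hnorm]
      refine mul_le_mul_of_nonneg_left ?_ (by positivity)
      exact mul_le_mul_of_nonneg_right h1 (Real.rpow_nonneg hx1 _)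
    calc ∫ x in Set.Ioo (0:ℝ) 1, ‖F k x‖ ≤ _ := hmono
      _ = |z| ^ k / (Nat.factorial k) * B := by rw [MeasureTheory.integral_const_mul]
  have hsummable : Summable fun k : ℕ => |z| ^ k / (Nat.factorial k) * B :=
    (Real.summable_pow_div_factorial |z|).mul_right B
  have hbound : (∑' k, ∫⁻ x, ‖F k x‖₊ ∂((MeasureTheory.volume).restrict (Set.Ioo 0 1))) ≠ ⊤ := by
    refine ne_top_of_le_ne_top ?_ (ENNReal.tsum_le_tsum hle)
    rw [← ENNReal.ofReal_tsum_of_nonneg (fun k => by positivity) hsummable]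
    exact ENNReal.ofReal_ne_top
  rw [MeasureTheory.integral_tsum (fun k => (hFint k).aestronglyMeasurable) hbound]
  have hval : ∀ k : ℕ, (∫ x in Set.Ioo (0:ℝ) 1, F k x) = z ^ k / (Nat.factorial k) *
      (Real.Gamma (a + k) * Real.Gamma (b - a) / Real.Gamma (b + k)) := by
    intro k
    show (∫ x in Set.Ioo (0:ℝ) 1, z ^ k / (Nat.factorial k) *
      (x ^ (a + (k:ℝ) - 1) * (1-x) ^ (b-a-1))) = _
    rw [MeasureTheory.integral_const_mul, ← MeasureTheory.integral_Ioc_eq_integral_Ioo,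
      beta_value (u := a + k) (by positivity) hba, show a + (k:ℝ) + (b - a) = b + k by ring]
  rw [← tsum_mul_left]
  refine tsum_congr fun k => ?_
  rw [hval k]
  have hb : (0:ℝ) < b := ha.trans hab
  have haG : Real.Gamma a ≠ 0 := (Real.Gamma_pos_of_pos ha).ne'
  have hbG : Real.Gamma b ≠ 0 := (Real.Gamma_pos_of_pos (by linarith)).ne'
  have hbkG : Real.Gamma (b + k) ≠ 0 := (Real.Gamma_pos_of_pos (by positivity)).ne'
  have hfk : (Nat.factorial k : ℝ) ≠ 0 := by positivity
  field_simp
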